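/- Fix integers n, m, n_z ≥ 1 and constants ḡ > 0, δ̄ ≥ 0, η > 0, θ > 0 and 0 < v < c. Let γ^w, γ^z : [0,∞) → [0,∞) be continuous strictly increasing bijections, let f̄_z, f̄_x : [0,∞) → [0,∞) be nondecreasing, and let α_c : (−v,∞) → ℝ be strictly increasing. Let X ⊆ ℝ^n be open and V : X → [0,∞) continuously differentiable with ‖∇V(x)‖ ≥ η whenever x ∈ X and V(x) ≥ v, and suppose the gain condition α_c(((c−v)/c)·V(x)) ≥ θ·V(x) + (1/ḡ)·f̄_z((γ^z)⁻¹(V(x))) + (1 + δ̄/ḡ)·(γ^w)⁻¹(V(x)) + (1/ḡ)·f̄_x(‖x‖) holds for every x ∈ X with V(x) ≥ c. Let g be a real n×m matrix with λ_min(g·gᵀ) ≥ ḡ², let f : ℝ^{n_z} × ℝ^n → ℝ^n satisfy ‖f(z,x)‖ ≤ f̄_z(‖z‖) + f̄_x(‖x‖), and let δ : ℝ^{n_z} × ℝ^n → ℝ^{n×m} satisfy ‖δ(z,x)‖ ≤ δ̄. Let T ∈ (0,∞], let x : [0,T) → X be differentiable, and let z : [0,T) → ℝ^{n_z}, u, w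 : [0,T) → ℝ^m be functions with W := sup_{t∈[0,T)} ‖w(t)‖ < ∞ and Z := sup_{t∈[0,T)} ‖z(t)‖ < ∞, such that for every t ∈ [0,T): x′(t) = f(z(t),x(t)) + (g + δ(z(t),x(t)))·(u(t) + w(t)), and, whenever ∇V(x(t)) ≠ 0, ⟨gᵀ∇V(x(t))/‖gᵀ∇V(x(t))‖, u(t)⟩ + (δ̄/ḡ)·‖u(t)‖ ≤ −α_c(V(x(t)) − v). Then for every t ∈ [0,T): V(x(t)) ≤ max{ V(x(0))·e^{−η·ḡ·θ·t}, γ^w(W), γ^z(Z), c }. -/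

import Mathlib

set_option maxHeartbeats 4000000


open scoped RealInnerProductSpace ENNReal

/-- Theorem 1, Property 2 of the paper: input-to-state practical safety of the
relative-degree-one plant `ẋ = f(z,x) + (g + δ(z,x))(u + w)` along a differentiable
trajectory defined on `[0,T)` with `T ∈ (0,∞]` (modeled by `T : ℝ≥0∞`, the domain
being `{t | 0 ≤ t ∧ (t : ℝ≥0∞) < T}`). The eigenvalue condition `λ_min(g gᵀ) ≥ ḡ²`
is encoded by its equivalent form `‖gᵀ p‖ ≥ ḡ ‖p‖`; `W` and `Z` are (arbitrary,
hence in particular the least) upper bounds of `‖w‖` and `‖z‖` on the domain. -/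
theorem stmt5 (n m n_z : ℕ) (hn : 1 ≤ n) (hm : 1 ≤ m) (hnz : 1 ≤ n_z)
    (gbar δbar η θ v c : ℝ)
    (hg : 0 < gbar) (hδ0 : 0 ≤ δbar) (hη : 0 < η) (hθ : 0 < θ)
    (hv : 0 < v) (hvc : v < c)
    (γw γz γw_inv γz_inv : ℝ → ℝ)
    (hγw_cont : ContinuousOn γw (Set.Ici 0))
    (hγw_mono : StrictMonoOn γw (Set.Ici 0))
    (hγw_bij : Set.BijOn γw (Set.Ici 0) (Set.Ici 0))
    (hγz_cont : ContinuousOn γz (Set.Ici 0))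
    (hγz_mono : StrictMonoOn γz (Set.Ici 0))
    (hγz_bij : Set.BijOn γz (Set.Ici 0) (Set.Ici 0))
    (hγw_inv : ∀ s ∈ Set.Ici (0 : ℝ), γw_inv s ∈ Set.Ici (0 : ℝ) ∧ γw (γw_inv s) = s)
    (hγz_inv : ∀ s ∈ Set.Ici (0 : ℝ), γz_inv s ∈ Set.Ici (0 : ℝ) ∧ γz (γz_inv s) = s)
    (fz fx : ℝ → ℝ)
    (hfz_mono : MonotoneOn fz (Set.Ici 0)) (hfz0 : ∀ s ∈ Set.Ici (0 : ℝ), 0 ≤ fz s)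
    (hfx_mono : MonotoneOn fx (Set.Ici 0)) (hfx0 : ∀ s ∈ Set.Ici (0 : ℝ), 0 ≤ fx s)
    (αc : ℝ → ℝ) (hαc : StrictMonoOn αc (Set.Ioi (-v)))
    (X : Set (EuclideanSpace ℝ (Fin n))) (hX : IsOpen X)
    (V : EuclideanSpace ℝ (Fin n) → ℝ)
    (hVreg : ContDiffOn ℝ 1 V X) (hVnonneg : ∀ y ∈ X, 0 ≤ V y)
    (hgrad : ∀ y ∈ X, v ≤ V y → η ≤ ‖gradient V y‖)
    (hgain : ∀ y ∈ X, c ≤ V y →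
      θ * V y + 1 / gbar * fz (γz_inv (V y)) + (1 + δbar / gbar) * γw_inv (V y)
        + 1 / gbar * fx ‖y‖ ≤ αc ((c - v) / c * V y))
    (g : EuclideanSpace ℝ (Fin m) →L[ℝ] EuclideanSpace ℝ (Fin n))
    (hgmin : ∀ p : EuclideanSpace ℝ (Fin n),
      gbar * ‖p‖ ≤ ‖ContinuousLinearMap.adjoint g p‖)
    (f : EuclideanSpace ℝ (Fin n_z) → EuclideanSpace ℝ (Fin n) → EuclideanSpace ℝ (Fin n))
    (hf : ∀ z x, ‖f z x‖ ≤ fz ‖z‖ + fx ‖x‖)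
    (δ : EuclideanSpace ℝ (Fin n_z) → EuclideanSpace ℝ (Fin n) →
      (EuclideanSpace ℝ (Fin m) →L[ℝ] EuclideanSpace ℝ (Fin n)))
    (hδ : ∀ z x, ‖δ z x‖ ≤ δbar)
    (T : ℝ≥0∞) (hT : 0 < T)
    (x : ℝ → EuclideanSpace ℝ (Fin n)) (z : ℝ → EuclideanSpace ℝ (Fin n_z))
    (u w : ℝ → EuclideanSpace ℝ (Fin m))
    (W Z : ℝ)
    (hW : ∀ t : ℝ, 0 ≤ t → ENNReal.ofReal t < T → ‖w t‖ ≤ W)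
    (hZ : ∀ t : ℝ, 0 ≤ t → ENNReal.ofReal t < T → ‖z t‖ ≤ Z)
    (hxX : ∀ t : ℝ, 0 ≤ t → ENNReal.ofReal t < T → x t ∈ X)
    (hode : ∀ t : ℝ, 0 ≤ t → ENNReal.ofReal t < T →
      HasDerivWithinAt x (f (z t) (x t) + (g + δ (z t) (x t)) (u t + w t))
        {s : ℝ | 0 ≤ s ∧ ENNReal.ofReal s < T} t)
    (hu : ∀ t : ℝ, 0 ≤ t → ENNReal.ofReal t < T → gradient V (x t) ≠ 0 →
      ⟪(‖ContinuousLinearMap.adjoint g (gradient V (x t))‖)⁻¹ •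
          ContinuousLinearMap.adjoint g (gradient V (x t)), u t⟫
        + δbar / gbar * ‖u t‖ ≤ -αc (V (x t) - v)) :
    ∀ t : ℝ, 0 ≤ t → ENNReal.ofReal t < T →
      V (x t) ≤ max (max (V (x 0) * Real.exp (-(η * gbar * θ * t))) (γw W))
        (max (γz Z) c) := by

  classical
  -- abbreviations
  set S : Set ℝ := {s : ℝ | 0 ≤ s ∧ ENNReal.ofReal s < T} with hSdef
  have h0T : ENNReal.ofReal 0 < T := by simpa using hT
  have hW0 : (0:ℝ) ≤ W := (norm_nonneg _).trans (hW 0 le_rfl h0T)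
  have hZ0 : (0:ℝ) ≤ Z := (norm_nonneg _).trans (hZ 0 le_rfl h0T)
  set lam : ℝ := η * gbar * θ with hlamdef
  have hlam_pos : 0 < lam := by positivity
  set K : ℝ := max (γw W) (max (γz Z) c) with hKdef
  have hcK : c ≤ K := le_max_of_le_right (le_max_right _ _)
  have hKpos : (0:ℝ) < K := lt_of_lt_of_le (hv.trans hvc) hcK
  set φ : ℝ → ℝ := fun s => V (x s) with hφdef
  set φ' : ℝ → ℝ := fun s =>
    ⟪gradient V (x s), f (z s) (x s) + (g + δ (z s) (x s)) (u s + w s)⟫ with hφ'def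
  -- the trajectory derivative of V
  have hderiv : ∀ s ∈ S, HasDerivWithinAt φ (φ' s) S s := by
    intro s hsS
    have hx_mem : x s ∈ X := hxX s hsS.1 hsS.2
    have hVdiff : DifferentiableAt ℝ V (x s) :=
      (hVreg.contDiffAt (hX.mem_nhds hx_mem)).differentiableAt one_ne_zero
    have hF : HasFDerivAt V
        (InnerProductSpace.toDual ℝ _ (gradient V (x s))) (x s) :=
      hasGradientAt_iff_hasFDerivAt.mp hVdiff.hasGradientAt
    have hcomp := hF.comp_hasDerivWithinAt s (hode s hsS.1 hsS.2)
    simpa [hφ'def, Function.comp_def, InnerProductSpace.toDual_apply_apply] using hcomp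
  -- the key decay bound
  have hbound : ∀ s ∈ S, K ≤ φ s → φ' s ≤ -lam * φ s := by
    intro s hsS hKφ
    have hx_mem : x s ∈ X := hxX s hsS.1 hsS.2
    have hφc : c ≤ φ s := hcK.trans hKφ
    have hφpos : (0:ℝ) < φ s := lt_of_lt_of_le (hv.trans hvc) hφc
    set p := gradient V (x s) with hpdef
    set q := ContinuousLinearMap.adjoint g p with hqdef
    have hpη : η ≤ ‖p‖ := hgrad _ hx_mem (le_trans hvc.le hφc)
    have hp0 : p ≠ 0 := by
      intro h
      rw [h, norm_zero] at hpη
      linarith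
    have hqg : gbar * ‖p‖ ≤ ‖q‖ := hgmin p
    have hppos : (0:ℝ) < ‖p‖ := lt_of_lt_of_le hη hpη
    have hqpos : (0:ℝ) < ‖q‖ := lt_of_lt_of_le (mul_pos hg hppos) hqg
    -- bounds coming from the class-K inverses
    obtain ⟨hwinv_mem, hwinv_eq⟩ := hγw_inv (φ s) hφpos.le
    obtain ⟨hzinv_mem, hzinv_eq⟩ := hγz_inv (φ s) hφpos.le
    have hwinv0 : (0:ℝ) ≤ γw_inv (φ s) := hwinv_mem
    have hzinv0 : (0:ℝ) ≤ γz_inv (φ s) := hzinv_mem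
    have hWle : W ≤ γw_inv (φ s) := by
      have h1 : γw W ≤ γw (γw_inv (φ s)) := by
        rw [hwinv_eq]; exact (le_max_left _ _).trans hKφ
      exact (hγw_mono.le_iff_le hW0 hwinv_mem).mp h1
    have hZle : Z ≤ γz_inv (φ s) := by
      have h1 : γz Z ≤ γz (γz_inv (φ s)) := by
        rw [hzinv_eq]
        exact le_trans (le_max_of_le_right (le_max_left _ _)) hKφ
      exact (hγz_mono.le_iff_le hZ0 hzinv_mem).mp h1
    have hwb : ‖w s‖ ≤ γw_inv (φ s) := (hW s hsS.1 hsS.2).trans hWle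
    have hfzb : fz ‖z s‖ ≤ fz (γz_inv (φ s)) :=
      hfz_mono (norm_nonneg _) hzinv_mem ((hZ s hsS.1 hsS.2).trans hZle)
    have hfz0' : (0:ℝ) ≤ fz (γz_inv (φ s)) := hfz0 _ hzinv_mem
    have hfx0' : (0:ℝ) ≤ fx ‖x s‖ := hfx0 _ (norm_nonneg _)
    -- expand the derivative
    have expand : φ' s = ⟪p, f (z s) (x s)⟫ + (⟪q, u s⟫ + ⟪q, w s⟫)
        + ⟪p, (δ (z s) (x s)) (u s + w s)⟫ := by
      simp only [hφ'def, hqdef, ContinuousLinearMap.add_apply, map_add,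
        inner_add_right, ContinuousLinearMap.adjoint_inner_left]
      ring
    -- bound each term
    have h1 : ⟪p, f (z s) (x s)⟫ ≤ ‖p‖ * (fz (γz_inv (φ s)) + fx ‖x s‖) := by
      refine (real_inner_le_norm _ _).trans ?_
      refine mul_le_mul_of_nonneg_left ?_ (norm_nonneg _)
      exact (hf _ _).trans (by linarith)
    have h2 : ⟪q, u s⟫ ≤ ‖q‖ * (-αc (φ s - v) - δbar / gbar * ‖u s‖) := by
      have hu' := hu s hsS.1 hsS.2 hp0
      rw [real_inner_smul_left] at hu'
      have h3 : ‖q‖⁻¹ * ⟪q, u s⟫ ≤ -αc (φ s - v) - δbar / gbar * ‖u s‖ := by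
        linarith
      calc ⟪q, u s⟫ = ‖q‖ * (‖q‖⁻¹ * ⟪q, u s⟫) := by
            field_simp
        _ ≤ ‖q‖ * (-αc (φ s - v) - δbar / gbar * ‖u s‖) :=
            mul_le_mul_of_nonneg_left h3 (norm_nonneg _)
    have h3 : ⟪q, w s⟫ ≤ ‖q‖ * γw_inv (φ s) :=
      (real_inner_le_norm _ _).trans
        (mul_le_mul_of_nonneg_left hwb (norm_nonneg _))
    have h4 : ⟪p, (δ (z s) (x s)) (u s + w s)⟫
        ≤ ‖p‖ * (δbar * (‖u s‖ + ‖w s‖)) := by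
      refine (real_inner_le_norm _ _).trans ?_
      refine mul_le_mul_of_nonneg_left ?_ (norm_nonneg _)
      calc ‖(δ (z s) (x s)) (u s + w s)‖
          ≤ ‖δ (z s) (x s)‖ * ‖u s + w s‖ := ContinuousLinearMap.le_opNorm _ _
        _ ≤ δbar * (‖u s‖ + ‖w s‖) :=
            mul_le_mul (hδ _ _) (norm_add_le _ _) (norm_nonneg _) hδ0
    -- ‖p‖ ≤ ‖q‖ / gbar
    have hPq : ‖p‖ ≤ ‖q‖ / gbar := by
      rw [le_div_iff₀ hg]; linarith [hqg, mul_comm gbar ‖p‖]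
    have hA : ⟪p, f (z s) (x s)⟫ ≤ ‖q‖ / gbar * (fz (γz_inv (φ s)) + fx ‖x s‖) :=
      h1.trans (mul_le_mul_of_nonneg_right hPq (by linarith))
    have hD : ⟪p, (δ (z s) (x s)) (u s + w s)⟫
        ≤ ‖q‖ / gbar * (δbar * (‖u s‖ + γw_inv (φ s))) := by
      refine h4.trans ?_
      have s1 : ‖p‖ * (δbar * (‖u s‖ + ‖w s‖))
          ≤ ‖p‖ * (δbar * (‖u s‖ + γw_inv (φ s))) := by
        refine mul_le_mul_of_nonneg_left ?_ (norm_nonneg _)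
        refine mul_le_mul_of_nonneg_left ?_ hδ0
        linarith
      refine s1.trans ?_
      refine mul_le_mul_of_nonneg_right hPq ?_
      have : (0:ℝ) ≤ ‖u s‖ + γw_inv (φ s) := by positivity
      positivity
    -- the gain condition
    have hαmono : αc ((c - v) / c * φ s) ≤ αc (φ s - v) := by
      have hc0 : (0:ℝ) < c := hv.trans hvc
      have hcv : (0:ℝ) < c - v := by linarith
      have harg1 : (c - v) / c * φ s ∈ Set.Ioi (-v) := by
        have : (0:ℝ) < (c - v) / c * φ s := mul_pos (div_pos hcv hc0) hφpos
        exact Set.mem_Ioi.mpr (by linarith)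
      have harg2 : φ s - v ∈ Set.Ioi (-v) := by
        have : (0:ℝ) < φ s - v := by linarith
        exact Set.mem_Ioi.mpr (by linarith)
      refine hαc.monotoneOn harg1 harg2 ?_
      rw [div_mul_eq_mul_div, div_le_iff₀ hc0]
      nlinarith
    have hbr : 1 / gbar * fz (γz_inv (φ s)) + 1 / gbar * fx ‖x s‖
        + (1 + δbar / gbar) * γw_inv (φ s) - αc (φ s - v) ≤ -θ * φ s := by
      have hgn := hgain (x s) hx_mem hφc
      linarith
    -- combine
    have hEq : ‖q‖ / gbar * (fz (γz_inv (φ s)) + fx ‖x s‖)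
        + (‖q‖ * (-αc (φ s - v) - δbar / gbar * ‖u s‖) + ‖q‖ * γw_inv (φ s))
        + ‖q‖ / gbar * (δbar * (‖u s‖ + γw_inv (φ s)))
        = ‖q‖ * (1 / gbar * fz (γz_inv (φ s)) + 1 / gbar * fx ‖x s‖
            + (1 + δbar / gbar) * γw_inv (φ s) - αc (φ s - v)) := by
      field_simp
      ring
    have htot : φ' s ≤ ‖q‖ * (1 / gbar * fz (γz_inv (φ s)) + 1 / gbar * fx ‖x s‖
        + (1 + δbar / gbar) * γw_inv (φ s) - αc (φ s - v)) := by
      rw [expand, ← hEq]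
      gcongr <;> linarith [hA, h2, h3, hD]
    have s1 : ‖q‖ * (1 / gbar * fz (γz_inv (φ s)) + 1 / gbar * fx ‖x s‖
        + (1 + δbar / gbar) * γw_inv (φ s) - αc (φ s - v)) ≤ ‖q‖ * (-θ * φ s) :=
      mul_le_mul_of_nonneg_left hbr (norm_nonneg _)
    have s2 : gbar * η ≤ ‖q‖ :=
      le_trans (mul_le_mul_of_nonneg_left hpη hg.le) hqg
    have s3 : ‖q‖ * (-θ * φ s) ≤ gbar * η * (-θ * φ s) := by
      have hneg : -θ * φ s ≤ 0 := by nlinarith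
      exact mul_le_mul_of_nonpos_right s2 hneg
    have : gbar * η * (-θ * φ s) = -lam * φ s := by rw [hlamdef]; ring
    linarith [htot, s1, s3, this.le, this.ge]
  -- now the comparison argument
  intro t ht htT
  have hsubIcc : Set.Icc 0 t ⊆ S := fun s hs =>
    ⟨hs.1, lt_of_le_of_lt (ENNReal.ofReal_le_ofReal hs.2) htT⟩
  have hφ00 : (0:ℝ) ≤ φ 0 := hVnonneg _ (hxX 0 le_rfl h0T)
  have hcont : ContinuousOn φ (Set.Icc 0 t) := fun s hs =>
    ((hderiv s (hsubIcc hs)).mono hsubIcc).continuousWithinAt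
  have main : ∀ ε : ℝ, ε ∈ Set.Ioo (0:ℝ) 1 →
      φ t ≤ max (φ 0 * Real.exp (-(lam * (1 - ε)) * t)) (K + ε) := by
    intro ε hε
    set μ : ℝ := lam * (1 - ε) with hμdef
    have hμpos : 0 < μ := mul_pos hlam_pos (by linarith [hε.2])
    set B : ℝ → ℝ := fun s => max (φ 0 * Real.exp (-μ * s)) (K + ε) with hBdef
    set B' : ℝ → ℝ := fun s =>
      if K + ε < φ 0 * Real.exp (-μ * s) then φ 0 * (Real.exp (-μ * s) * (-μ))
      else 0 with hB'def
    have hexp_cont : Continuous fun s : ℝ => φ 0 * Real.exp (-μ * s) := by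
      continuity
    have hf' : ∀ s ∈ Set.Ico 0 t, ∀ r, φ' s < r →
        ∃ᶠ y in nhdsWithin s (Set.Ioi s), slope φ s y < r := by
      intro s hs r hr
      have hd : HasDerivWithinAt φ (φ' s) (Set.Ioc s t) s :=
        (hderiv s (hsubIcc ⟨hs.1, hs.2.le⟩)).mono
          (fun y hy => hsubIcc ⟨hs.1.trans hy.1.le, hy.2⟩)
      have h2 := hd.limsup_slope_le' (by simp) hr
      rw [nhdsWithin_Ioc_eq_nhdsGT hs.2] at h2
      exact h2.frequently
    have ha : φ 0 ≤ B 0 := by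
      simp only [hBdef, mul_zero, Real.exp_zero, mul_one]
      exact le_max_left _ _
    have hBcont : ContinuousOn B (Set.Icc 0 t) :=
      (hexp_cont.max continuous_const).continuousOn
    have hB' : ∀ s ∈ Set.Ico 0 t, HasDerivWithinAt B (B' s) (Set.Ici s) s := by
      intro s _
      by_cases h : K + ε < φ 0 * Real.exp (-μ * s)
      · have hev : ∀ᶠ y in nhds s, K + ε < φ 0 * Real.exp (-μ * y) :=
          (hexp_cont.continuousAt (x := s)).eventually_const_lt h
        have hder : HasDerivAt (fun y => φ 0 * Real.exp (-μ * y))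
            (φ 0 * (Real.exp (-μ * s) * (-μ))) s := by
          have hlin : HasDerivAt (fun y : ℝ => -μ * y) (-μ) s := by
            simpa using (hasDerivAt_id s).const_mul (-μ)
          exact hlin.exp.const_mul (φ 0)
        have hBev : B =ᶠ[nhds s] fun y => φ 0 * Real.exp (-μ * y) :=
          hev.mono fun y hy => max_eq_left hy.le
        have : HasDerivAt B (φ 0 * (Real.exp (-μ * s) * (-μ))) s :=
          hder.congr_of_eventuallyEq hBev
        have hval : B' s = φ 0 * (Real.exp (-μ * s) * (-μ)) := by
          simp only [hB'def]; rw [if_pos h]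
        rw [hval]
        exact this.hasDerivWithinAt
      · push_neg at h
        have hc : ∀ y ∈ Set.Ici s, B y = K + ε := by
          intro y hy
          have : φ 0 * Real.exp (-μ * y) ≤ K + ε := by
            refine le_trans ?_ h
            refine mul_le_mul_of_nonneg_left ?_ hφ00
            exact Real.exp_le_exp.mpr (by nlinarith [Set.mem_Ici.mp hy])
          exact max_eq_right this
        have : HasDerivWithinAt B 0 (Set.Ici s) s :=
          (hasDerivWithinAt_const s (Set.Ici s) (K + ε)).congr hc (hc s Set.self_mem_Ici)
        have hval : B' s = 0 := by
          simp only [hB'def]; rw [if_neg (not_lt.mpr h)]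
        rw [hval]
        exact this
    have hbd : ∀ s ∈ Set.Ico 0 t, φ s = B s → φ' s < B' s := by
      intro s hs heq
      have hsS : s ∈ S := hsubIcc ⟨hs.1, hs.2.le⟩
      have hKφ : K + ε ≤ φ s := by rw [heq]; exact le_max_right _ _
      have hb := hbound s hsS (by linarith [hε.1])
      have hφpos : (0:ℝ) < φ s := lt_of_lt_of_le (by linarith [hε.1]) hKφ
      by_cases h : K + ε < φ 0 * Real.exp (-μ * s)
      · have hBs : B s = φ 0 * Real.exp (-μ * s) := max_eq_left h.le
        have hB's : B' s = φ s * (-μ) := by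
          rw [hB'def]
          simp only [if_pos h]
          rw [heq, hBs]; ring
        rw [hB's]
        have hprod : 0 < lam * ε * φ s := mul_pos (mul_pos hlam_pos hε.1) hφpos
        have : -lam * φ s < φ s * (-μ) := by
          rw [hμdef]; nlinarith [hprod]
        linarith
      · have hB's : B' s = 0 := by rw [hB'def]; simp only [if_neg h]
        rw [hB's]
        nlinarith [mul_pos hlam_pos hφpos]
    have := image_le_of_liminf_slope_right_lt_deriv_boundary' hcont hf' ha hBcont hB' hbd
      (Set.right_mem_Icc.mpr ht)
    simpa [hBdef, hμdef] using this
  -- pass to the limit ε → 0⁺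
  have hφt : φ t ≤ max (φ 0 * Real.exp (-lam * t)) K := by
    have htend : Filter.Tendsto
        (fun ε : ℝ => max (φ 0 * Real.exp (-(lam * (1 - ε)) * t)) (K + ε))
        (nhdsWithin 0 (Set.Ioi 0)) (nhds (max (φ 0 * Real.exp (-lam * t)) K)) := by
      have hc : Continuous fun ε : ℝ =>
          max (φ 0 * Real.exp (-(lam * (1 - ε)) * t)) (K + ε) := by
        continuity
      have h0 : max (φ 0 * Real.exp (-(lam * (1 - (0:ℝ))) * t)) (K + 0)
          = max (φ 0 * Real.exp (-lam * t)) K := by norm_num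
      have := hc.tendsto 0
      rw [h0] at this
      exact this.mono_left nhdsWithin_le_nhds
    refine ge_of_tendsto htend ?_
    filter_upwards [Ioo_mem_nhdsGT_of_mem (Set.left_mem_Ico.mpr zero_lt_one)]
      with ε hε using main ε hε
  -- rewrite into the required form
  have hgoal : max (max (V (x 0) * Real.exp (-(η * gbar * θ * t))) (γw W))
      (max (γz Z) c) = max (φ 0 * Real.exp (-lam * t)) K := by
    rw [hKdef, hφdef, hlamdef, max_assoc]
    ring_nf
  rw [hgoal]
  exact hφt
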